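/- Paley–Wiener–Zygmund theorem: Almost surely, the sample path t ↦ B(t,ω) of standard Brownian motion is nowhere differentiable on (0,1]. -/

import Mathlib

open MeasureTheory ProbabilityTheory Filter Set

noncomputable section

structure IsStdBM {Ω : Type*} [MeasurableSpace Ω] (P : Measure Ω) (B : ℝ → Ω → ℝ) : Prop where
  meas : ∀ t, Measurable (B t)
  start : ∀ ω, B 0 ω = 0
  cont : ∀ ω, Continuous fun t => B t ω
  indep : ∀ (n : ℕ) (t : Fin (n + 1) → ℝ), (∀ i, 0 ≤ t i) → Monotone t →
      iIndepFun
        (fun i : Fin n => fun ω => B (t i.succ) ω - B (t i.castSucc) ω) P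
  gauss : ∀ s t : ℝ, 0 ≤ s → s ≤ t →
      P.map (fun ω => B t ω - B s ω) = gaussianReal 0 (t - s).toNNReal

open Real
open scoped NNReal ENNReal

namespace PWZAux

/-- Gaussian small-ball bound. -/
lemma gauss_ball (v : ℝ≥0) (hv : v ≠ 0) (a : ℝ) (ha : 0 ≤ a) :
    gaussianReal 0 v (Set.Icc (-a) a) ≤ ENNReal.ofReal (a / Real.sqrt v) := by
  have hv' : (0:ℝ) < (v:ℝ) := by positivity
  have hπ : (0:ℝ) < 2 * π * v := by positivity
  have hpdf : ∀ x : ℝ, gaussianPDF 0 v x ≤ ENNReal.ofReal ((Real.sqrt (2 * π * v))⁻¹) := by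
    intro x
    rw [gaussianPDF]
    apply ENNReal.ofReal_le_ofReal
    rw [gaussianPDFReal]
    have h1 : rexp (-(x - 0)^2 / (2 * v)) ≤ 1 := by
      rw [Real.exp_le_one_iff]
      apply div_nonpos_of_nonpos_of_nonneg
      · simp [sq_nonneg]
      · positivity
    calc (Real.sqrt (2 * π * v))⁻¹ * rexp (-(x - 0)^2 / (2 * v))
        ≤ (Real.sqrt (2 * π * v))⁻¹ * 1 := by
          apply mul_le_mul_of_nonneg_left h1 (by positivity)
      _ = (Real.sqrt (2 * π * v))⁻¹ := mul_one _
  calc gaussianReal 0 v (Set.Icc (-a) a)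
      = ∫⁻ x in Set.Icc (-a) a, gaussianPDF 0 v x := gaussianReal_apply 0 hv _
    _ ≤ ∫⁻ _ in Set.Icc (-a) a, ENNReal.ofReal ((Real.sqrt (2 * π * v))⁻¹) :=
        setLIntegral_mono (by fun_prop) fun x _ => hpdf x
    _ = ENNReal.ofReal ((Real.sqrt (2 * π * v))⁻¹) * volume (Set.Icc (-a) a) :=
        setLIntegral_const _ _
    _ ≤ ENNReal.ofReal (a / Real.sqrt v) := by
        rw [Real.volume_Icc, ← ENNReal.ofReal_mul (by positivity)]
        apply ENNReal.ofReal_le_ofReal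
        have h2 : Real.sqrt (2 * π * v) = Real.sqrt (2 * π) * Real.sqrt v :=
          Real.sqrt_mul (by positivity) _
        have h4 : (2:ℝ) ≤ Real.sqrt (2 * π) := by
          nlinarith [Real.sq_sqrt (le_of_lt (by positivity : (0:ℝ) < 2*π)),
            Real.sqrt_nonneg (2*π), Real.pi_gt_three]
        have hsv : (0:ℝ) < Real.sqrt v := Real.sqrt_pos.2 hv'
        rw [h2]
        rw [div_eq_mul_inv, mul_inv, show a - -a = 2 * a by ring]
        calc (Real.sqrt (2*π))⁻¹ * (Real.sqrt v)⁻¹ * (2 * a)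
            = (2 * (Real.sqrt (2*π))⁻¹) * (a * (Real.sqrt v)⁻¹) := by ring
          _ ≤ 1 * (a * (Real.sqrt v)⁻¹) := by
              apply mul_le_mul_of_nonneg_right _ (by positivity)
              rw [mul_inv_le_iff₀ (by positivity), one_mul]
              exact h4
          _ = a * (Real.sqrt v)⁻¹ := one_mul _

/-- Local Lipschitz bound from differentiability. -/
lemma loc_lip {f : ℝ → ℝ} {t : ℝ} (h : DifferentiableAt ℝ f t) :
    ∃ m : ℕ, 1 ≤ m ∧ ∀ s : ℝ, |s - t| ≤ 3 / m → |f s - f t| ≤ m * |s - t| := by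
  have hO : (fun s => f s - f t) =O[nhds t] fun s => s - t :=
    (h.hasFDerivAt.isBigO_sub)
  obtain ⟨C, hC⟩ := hO.bound
  rw [Metric.eventually_nhds_iff] at hC
  obtain ⟨δ, hδ, hball⟩ := hC
  set m : ℕ := ⌈max C 0⌉₊ + ⌈3 / δ⌉₊ + 1 with hm
  refine ⟨m, by omega, fun s hs => ?_⟩
  have hmC : C ≤ (m : ℝ) := by
    calc C ≤ max C 0 := le_max_left _ _
      _ ≤ (⌈max C 0⌉₊ : ℝ) := Nat.le_ceil _
      _ ≤ (m : ℝ) := by rw [hm]; push_cast; linarith [(Nat.cast_nonneg (α := ℝ)) ⌈3/δ⌉₊]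
  have hmδ : 3 / (m:ℝ) < δ := by
    have h1 : 3 / δ < (m:ℝ) := by
      calc 3 / δ ≤ (⌈3/δ⌉₊ : ℝ) := Nat.le_ceil _
        _ < (m : ℝ) := by rw [hm]; push_cast; linarith [(Nat.cast_nonneg (α := ℝ)) ⌈max C 0⌉₊]
    have hm0 : (0:ℝ) < m := by positivity
    rw [div_lt_iff₀ hm0]
    rw [div_lt_iff₀ hδ] at h1
    linarith
  have hdist : dist s t < δ := by
    rw [Real.dist_eq]; linarith
  have := hball hdist
  simp only [Real.norm_eq_abs] at this
  calc |f s - f t| ≤ C * |s - t| := this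
    _ ≤ m * |s - t| := mul_le_mul_of_nonneg_right hmC (abs_nonneg _)

variable {Ω : Type*} [MeasurableSpace Ω] (P : Measure Ω) [IsProbabilityMeasure P]
  (B : ℝ → Ω → ℝ)

/-- The event that the `i`-th dyadic increment at scale `1/n` is at most `7m/n`. -/
def SEv (n m i : ℕ) : Set Ω :=
  {ω | |B (((i:ℝ)+1)/n) ω - B ((i:ℝ)/n) ω| ≤ 7*m/n}

lemma S_prob (hB : IsStdBM P B) (n m i : ℕ) (hn : 1 ≤ n) :
    P (SEv B n m i) ≤ ENNReal.ofReal (7*m / Real.sqrt n) := by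
  have hn0 : (0:ℝ) < n := by exact_mod_cast hn
  set a : ℝ := 7*m/n with ha
  have ha0 : 0 ≤ a := by positivity
  have hmeas : Measurable (fun ω => B (((i:ℝ)+1)/n) ω - B ((i:ℝ)/n) ω) :=
    (hB.meas _).sub (hB.meas _)
  have hset : SEv B n m i = (fun ω => B (((i:ℝ)+1)/n) ω - B ((i:ℝ)/n) ω) ⁻¹'
      (Set.Icc (-a) a) := by
    ext ω; simp [SEv, abs_le, ha]
  have hmap := hB.gauss ((i:ℝ)/n) (((i:ℝ)+1)/n) (by positivity)
    (by gcongr; linarith)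
  have hvar : ((i:ℝ)+1)/n - (i:ℝ)/n = 1/n := by
    rw [div_sub_div_same]; ring_nf
  rw [hvar] at hmap
  have hv : ((1:ℝ)/n).toNNReal ≠ 0 := by
    rw [ne_eq, Real.toNNReal_eq_zero]; push_neg; positivity
  have hcoe : (((1:ℝ)/n).toNNReal : ℝ) = 1/n := Real.coe_toNNReal _ (by positivity)
  calc P (SEv B n m i) = (P.map (fun ω => B (((i:ℝ)+1)/n) ω - B ((i:ℝ)/n) ω))
        (Set.Icc (-a) a) := by
        rw [Measure.map_apply hmeas measurableSet_Icc, hset]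
    _ = gaussianReal 0 ((1:ℝ)/n).toNNReal (Set.Icc (-a) a) := by rw [hmap]
    _ ≤ ENNReal.ofReal (a / Real.sqrt (((1:ℝ)/n).toNNReal : ℝ)) := gauss_ball _ hv a ha0
    _ = ENNReal.ofReal (7*m / Real.sqrt n) := by
        congr 1
        rw [hcoe, one_div, Real.sqrt_inv, ha]
        have hs : Real.sqrt n * Real.sqrt n = n := Real.mul_self_sqrt hn0.le
        have hs0 : (0:ℝ) < Real.sqrt n := Real.sqrt_pos.2 hn0
        rw [div_inv_eq_mul, div_mul_eq_mul_div, ← hs]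
        field_simp
        rw [Real.sqrt_sq hs0.le]


lemma triple_bound (hB : IsStdBM P B) (n m k : ℕ) (hn : 1 ≤ n) :
    P (⋂ i : Fin 3, SEv B n m (k+1+(i:ℕ))) ≤ ENNReal.ofReal (7*m / Real.sqrt n) ^ 3 := by
  have hn0 : (0:ℝ) < n := by exact_mod_cast hn
  set a : ℝ := 7*m/n with ha
  set t : Fin 4 → ℝ := fun j => ((k:ℝ) + 1 + (j:ℕ)) / n with htdef
  have ht0 : ∀ j, 0 ≤ t j := fun j => by positivity
  have htmono : Monotone t := by
    intro x y hxy
    have : (x:ℕ) ≤ (y:ℕ) := hxy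
    simp only [htdef]
    gcongr
  have hind := hB.indep 3 t ht0 htmono
  have hfun : ∀ i : Fin 3,
      (fun ω => B (t i.succ) ω - B (t i.castSucc) ω) ⁻¹' (Set.Icc (-a) a)
        = SEv B n m (k+1+(i:ℕ)) := by
    intro i
    have e1 : t i.succ = ((((k+1+(i:ℕ) : ℕ)):ℝ) + 1)/n := by
      simp only [htdef, Fin.val_succ]; push_cast; ring_nf
    have e2 : t i.castSucc = (((k+1+(i:ℕ) : ℕ)):ℝ)/n := by
      simp only [htdef, Fin.coe_castSucc]; push_cast; ring_nf
    ext ω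
    simp [SEv, abs_le, e1, e2, ha]
  have hprod := hind.meas_iInter (s := fun i : Fin 3 => SEv B n m (k+1+(i:ℕ)))
    (fun i => ⟨Set.Icc (-a) a, measurableSet_Icc, hfun i⟩)
  rw [hprod]
  calc ∏ i : Fin 3, P (SEv B n m (k+1+(i:ℕ)))
      ≤ ∏ _i : Fin 3, ENNReal.ofReal (7*m / Real.sqrt n) :=
        Finset.prod_le_prod' fun i _ => S_prob P B hB n m _ hn
    _ = ENNReal.ofReal (7*m / Real.sqrt n) ^ 3 := by
        rw [Finset.prod_const]; norm_num

lemma Em_bound (hB : IsStdBM P B) (n m : ℕ) (hn : 1 ≤ n) :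
    P (⋃ k ∈ Finset.range n, ⋂ i : Fin 3, SEv B n m (k+1+(i:ℕ)))
      ≤ ENNReal.ofReal (343 * m^3 / Real.sqrt n) := by
  have hn0 : (0:ℝ) < n := by exact_mod_cast hn
  have hs0 : (0:ℝ) < Real.sqrt n := Real.sqrt_pos.2 hn0
  have hs : Real.sqrt n * Real.sqrt n = n := Real.mul_self_sqrt hn0.le
  calc P (⋃ k ∈ Finset.range n, ⋂ i : Fin 3, SEv B n m (k+1+(i:ℕ)))
      ≤ ∑ k ∈ Finset.range n, P (⋂ i : Fin 3, SEv B n m (k+1+(i:ℕ))) :=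
        measure_biUnion_finset_le _ _
    _ ≤ ∑ _k ∈ Finset.range n, ENNReal.ofReal (7*m / Real.sqrt n) ^ 3 :=
        Finset.sum_le_sum fun k _ => triple_bound P B hB n m k hn
    _ = (n : ℝ≥0∞) * ENNReal.ofReal (7*m / Real.sqrt n) ^ 3 := by
        rw [Finset.sum_const, Finset.card_range, nsmul_eq_mul]
    _ = ENNReal.ofReal ((n : ℝ) * (7*m / Real.sqrt n) ^ 3) := by
        rw [← ENNReal.ofReal_pow (by positivity), ← ENNReal.ofReal_natCast n,
          ← ENNReal.ofReal_mul (by positivity)]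
    _ = ENNReal.ofReal (343 * m^3 / Real.sqrt n) := by
        congr 1
        field_simp
        rw [show Real.sqrt n ^ 2 = (n:ℝ) from by rw [sq, hs]]
        ring


lemma incl (m n : ℕ) (hm : 1 ≤ m) (hmn : 2*m ≤ n) :
    {ω : Ω | ∃ t ∈ Set.Ioc (0:ℝ) 1, ∀ s, |s - t| ≤ 3/(m:ℝ) → |B s ω - B t ω| ≤ m * |s - t|}
      ⊆ ⋃ k ∈ Finset.range n, ⋂ i : Fin 3, SEv B n m (k+1+(i:ℕ)) := by
  intro ω hω
  obtain ⟨t, ⟨ht0, ht1⟩, hlip⟩ := hω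
  have hn : 1 ≤ n := by omega
  have hn0 : (0:ℝ) < n := by exact_mod_cast hn
  have hm0 : (0:ℝ) < m := by exact_mod_cast hm
  set k' : ℕ := ⌈(n:ℝ)*t⌉₊ with hk'
  have hk'1 : 1 ≤ k' := Nat.ceil_pos.2 (by positivity)
  have hk'n : k' ≤ n := Nat.ceil_le.2 (by nlinarith)
  set k : ℕ := k' - 1 with hkdef
  have hkn : k < n := by omega
  have hkc : (k:ℝ) = (k':ℝ) - 1 := by
    have h : k + 1 = k' := by omega
    rw [← h]; push_cast; ring
  have hlo : (k:ℝ) < n * t := by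
    have := Nat.ceil_lt_add_one (by positivity : (0:ℝ) ≤ (n:ℝ)*t)
    rw [hkc]; linarith
  have hhi : (n:ℝ) * t ≤ (k:ℝ) + 1 := by
    rw [hkc]; linarith [Nat.le_ceil ((n:ℝ)*t)]
  have htlo : (k:ℝ)/n < t := by rw [div_lt_iff₀ hn0]; linarith
  have hthi : t ≤ ((k:ℝ)+1)/n := by rw [le_div_iff₀ hn0]; linarith
  have hclose : ∀ j : ℕ, 1 ≤ j → |((k:ℝ)+j)/n - t| ≤ (j:ℝ)/n := by
    intro j hj
    have hj1 : (1:ℝ) ≤ j := by exact_mod_cast hj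
    rw [abs_le]
    constructor
    · rw [add_div]
      have h1 : (1:ℝ)/n ≤ (j:ℝ)/n := by gcongr
      have h2 : t ≤ (k:ℝ)/n + 1/n := by rw [← add_div]; exact hthi
      linarith
    · rw [add_div]
      linarith
  have cond : (4:ℝ)/n ≤ 3/m := by
    rw [div_le_div_iff₀ hn0 hm0]
    have h2 : ((2*m : ℕ):ℝ) ≤ n := by exact_mod_cast hmn
    push_cast at h2
    linarith
  refine Set.mem_biUnion (Finset.mem_range.2 hkn) (Set.mem_iInter.2 fun i => ?_)
  have hi2 : ((i:ℕ):ℝ) ≤ 2 := by exact_mod_cast Nat.lt_succ_iff.mp i.isLt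
  have hi0 : (0:ℝ) ≤ ((i:ℕ):ℝ) := by positivity
  set p1 : ℝ := ((k:ℝ) + (1+(i:ℕ)))/n with hp1
  set p2 : ℝ := ((k:ℝ) + (2+(i:ℕ)))/n with hp2
  have c1 : |p1 - t| ≤ (3:ℝ)/n := by
    have h := hclose (1+(i:ℕ)) (by omega)
    push_cast at h
    rw [hp1]
    refine h.trans ?_
    gcongr
    linarith
  have c2 : |p2 - t| ≤ (4:ℝ)/n := by
    have h := hclose (2+(i:ℕ)) (by omega)
    push_cast at h
    rw [hp2]
    refine h.trans ?_
    gcongr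
    linarith
  have h34 : (3:ℝ)/n ≤ 4/n := by gcongr <;> norm_num
  have lip1 := hlip p1 (c1.trans (h34.trans cond))
  have lip2 := hlip p2 (c2.trans cond)
  simp only [SEv, Set.mem_setOf_eq]
  have e1 : ((k+1+(i:ℕ) : ℕ):ℝ) = (k:ℝ)+1+(i:ℕ) := by push_cast; ring
  rw [e1]
  have e2 : ((k:ℝ)+1+(i:ℕ)+1)/(n:ℝ) = p2 := by rw [hp2]; ring_nf
  have e3 : ((k:ℝ)+1+(i:ℕ))/(n:ℝ) = p1 := by rw [hp1]; ring_nf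
  rw [e2, e3]
  calc |B p2 ω - B p1 ω| = |(B p2 ω - B t ω) + (B t ω - B p1 ω)| := by ring_nf
    _ ≤ |B p2 ω - B t ω| + |B t ω - B p1 ω| := abs_add_le _ _
    _ ≤ (m:ℝ) * |p2 - t| + m * |p1 - t| := by
        refine add_le_add lip2 ?_
        rw [abs_sub_comm]; exact lip1
    _ ≤ (m:ℝ) * (4/n) + m * (3/n) := by gcongr
    _ = 7*m/n := by ring

end PWZAux

/-- Paley–Wiener–Zygmund: almost surely, the Brownian path is nowhere
differentiable on `(0,1]`. -/
theorem nowhere_differentiable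
    {Ω : Type*} [MeasurableSpace Ω] (P : Measure Ω) [IsProbabilityMeasure P]
    (B : ℝ → Ω → ℝ) (hB : IsStdBM P B) :
    P {ω | ∀ t ∈ Set.Ioc (0 : ℝ) 1, ¬ DifferentiableAt ℝ (fun s => B s ω) t}
      = 1 := by
  classical
  set A : ℕ → Set Ω := fun m =>
    {ω | ∃ t ∈ Set.Ioc (0:ℝ) 1, ∀ s, |s - t| ≤ 3/(m:ℝ) →
      |B s ω - B t ω| ≤ m * |s - t|} with hA
  have hAm : ∀ m : ℕ, 1 ≤ m → P (A m) = 0 := by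
    intro m hm
    have hle : ∀ n : ℕ, 2*m ≤ n →
        P (A m) ≤ ENNReal.ofReal (343 * (m:ℝ)^3 / Real.sqrt n) := by
      intro n hn
      refine le_trans (measure_mono (PWZAux.incl B m n hm hn)) ?_
      exact PWZAux.Em_bound P B hB n m (by omega)
    have hsqrt : Tendsto (fun n : ℕ => Real.sqrt n) atTop atTop := by
      have h2 : Tendsto (fun x : ℝ => x ^ (1/2:ℝ)) atTop atTop :=
        tendsto_rpow_atTop (by norm_num)
      have h3 : Tendsto Real.sqrt atTop atTop :=
        h2.congr fun x => (Real.sqrt_eq_rpow x).symm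
      exact h3.comp tendsto_natCast_atTop_atTop
    have hreal : Tendsto (fun n : ℕ => 343 * (m:ℝ)^3 / Real.sqrt n) atTop (nhds 0) :=
      Tendsto.div_atTop tendsto_const_nhds hsqrt
    have htend : Tendsto (fun n : ℕ => ENNReal.ofReal (343 * (m:ℝ)^3 / Real.sqrt n))
        atTop (nhds 0) := by
      rw [← ENNReal.ofReal_zero]
      exact ENNReal.tendsto_ofReal hreal
    have hle0 : P (A m) ≤ 0 := ge_of_tendsto htend (eventually_atTop.2 ⟨2*m, hle⟩)
    exact le_antisymm hle0 zero_le
  have hnull : P (⋃ m : ℕ, A (m+1)) = 0 :=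
    measure_iUnion_null fun m => hAm (m+1) (Nat.le_add_left 1 m)
  set T := {ω | ∀ t ∈ Set.Ioc (0 : ℝ) 1, ¬ DifferentiableAt ℝ (fun s => B s ω) t} with hT
  have hcover : (Set.univ : Set Ω) ⊆ T ∪ ⋃ m : ℕ, A (m+1) := by
    intro ω _
    by_cases hωT : ω ∈ T
    · exact Or.inl hωT
    · right
      simp only [hT, Set.mem_setOf_eq] at hωT
      push_neg at hωT
      obtain ⟨t, ht, hdiff⟩ := hωT
      obtain ⟨m, hm1, hlip⟩ := PWZAux.loc_lip hdiff
      refine Set.mem_iUnion.2 ⟨m-1, ?_⟩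
      have hmm : m - 1 + 1 = m := by omega
      rw [hmm]
      exact ⟨t, ht, hlip⟩
  have h1 : (1:ℝ≥0∞) ≤ P T := by
    have hmono : P Set.univ ≤ P (T ∪ ⋃ m, A (m+1)) := measure_mono hcover
    rw [measure_univ] at hmono
    calc (1:ℝ≥0∞) ≤ P (T ∪ ⋃ m, A (m+1)) := hmono
      _ ≤ P T + P (⋃ m, A (m+1)) := measure_union_le _ _
      _ = P T := by rw [hnull, add_zero]
  exact le_antisymm ((measure_mono (Set.subset_univ T)).trans (le_of_eq measure_univ)) h1
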